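/- Let W : ℝ → [0,∞) be continuous with finite zero set Z, suppose there exist z₁, z₂ ∈ Z with z₁ < 0 < z₂, suppose 0 ∉ Z (so W(0) > 0), and suppose there are constants c₁,c₂,c₃ > 0 and p ∈ (1,∞) with c₁|s|^p − c₂ ≤ W(s) ≤ c₃(|s|^p + 1) for all s ∈ ℝ. Then the infimum over all u ∈ W^{1,p}₀(0,1) (absolutely continuous u : [0,1] → ℝ with u(0) = u(1) = 0 and u′ ∈ L^p(0,1)) of the functional E(u) = ∫₀¹ (W(u′(x)) + u(x)²) dx equals 0, and this infimum is not attained by any u ∈ W^{1,p}₀(0,1). -/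

import Mathlib

open MeasureTheory Set Filter

/-- `u ∈ W^{1,p}₀(0,1)`: `u` is absolutely continuous on `[0,1]` with derivative `u'`,
`u(0) = u(1) = 0`, and `u' ∈ L^p(0,1)`. -/
def AdmissibleW1p0 (p : ℝ) (u u' : ℝ → ℝ) : Prop :=
  u 0 = 0 ∧ u 1 = 0 ∧
  (∀ x ∈ Set.Icc (0:ℝ) 1, u x = ∫ t in (0:ℝ)..x, u' t) ∧
  IntervalIntegrable u' volume 0 1 ∧
  IntervalIntegrable (fun x => |u' x| ^ p) volume 0 1

/-- The energy `E(u) = ∫₀¹ (W(u'(x)) + u(x)²) dx`. -/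
noncomputable def energyE (W : ℝ → ℝ) (u u' : ℝ → ℝ) : ℝ :=
  ∫ x in (0:ℝ)..1, (W (u' x) + (u x) ^ 2)

lemma intervalIntegrable_of_bdd {f : ℝ → ℝ} {M : ℝ} (hmeas : Measurable f)
    (hbdd : ∀ y, |f y| ≤ M) (a b : ℝ) : IntervalIntegrable f volume a b := by
  rw [intervalIntegrable_iff]
  refine Measure.integrableOn_of_bounded ?_ hmeas.aestronglyMeasurable (M := M) ?_
  · rw [Set.uIoc]; exact measure_Ioc_lt_top.ne
  · exact ae_of_all _ (fun y => by rw [Real.norm_eq_abs]; exact hbdd y)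

lemma sawtooth_exists (W : ℝ → ℝ) (p z₁ z₂ : ℝ) (hz₁ : W z₁ = 0) (hz₂ : W z₂ = 0)
    (hz₁neg : z₁ < 0) (hz₂pos : 0 < z₂) (hW_nonneg : ∀ s, 0 ≤ W s) (hp : 0 ≤ p) (n : ℕ) :
    ∃ u u' : ℝ → ℝ, AdmissibleW1p0 p u u' ∧
      energyE W u u' ≤ ((max z₂ (-z₁)) / (n+1))^2 := by
  have hzd : z₁ - z₂ < 0 := by linarith
  have hne : z₁ - z₂ ≠ 0 := ne_of_lt hzd
  set t : ℝ := z₁ / (z₁ - z₂) with ht_def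
  have ht0 : 0 < t := div_pos_of_neg_of_neg hz₁neg hzd
  have ht1 : t < 1 := by rw [ht_def, div_lt_one_of_neg hzd]; linarith
  have key : t * z₂ + (1 - t) * z₁ = 0 := by rw [ht_def]; field_simp; ring
  set M : ℝ := max z₂ (-z₁) with hM_def
  have hM0 : 0 < M := lt_max_of_lt_left hz₂pos
  set h : ℝ → ℝ := fun y => if Int.fract y < t then z₂ else z₁ with hh_def
  have hmeas : Measurable h :=
    Measurable.ite (measurableSet_lt measurable_fract measurable_const)
      measurable_const measurable_const
  have hval : ∀ y, h y = z₁ ∨ h y = z₂ := by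
    intro y; by_cases hc : Int.fract y < t
    · right; simp [hh_def, hc]
    · left; simp [hh_def, hc]
  have hWh : ∀ y, W (h y) = 0 := by
    intro y; rcases hval y with e | e <;> rw [e] <;> assumption
  have hMb : ∀ y, |h y| ≤ M := by
    intro y; rcases hval y with e | e <;> rw [e]
    · rw [abs_of_nonpos hz₁neg.le]; exact le_max_right _ _
    · rw [abs_of_nonneg hz₂pos.le]; exact le_max_left _ _
  have hint : ∀ a b : ℝ, IntervalIntegrable h volume a b :=
    intervalIntegrable_of_bdd hmeas hMb
  have hper : Function.Periodic h 1 := by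
    intro y; simp [hh_def, Int.fract_add_one]
  -- the integral over one period vanishes
  have hae_t : ∀ᵐ y : ℝ, y ≠ t := by
    refine ae_iff.2 ?_
    simpa using measure_singleton (α := ℝ) t
  have hae_1 : ∀ᵐ y : ℝ, y ≠ (1:ℝ) := by
    refine ae_iff.2 ?_
    simpa using measure_singleton (α := ℝ) (1:ℝ)
  have hI1 : (∫ y in (0:ℝ)..1, h y) = 0 := by
    rw [intervalIntegral.integral_of_le zero_le_one,
      (Ioc_union_Ioc_eq_Ioc ht0.le ht1.le).symm,
      setIntegral_union (Ioc_disjoint_Ioc_of_le le_rfl) measurableSet_Ioc (hint 0 t).1 (hint t 1).1]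
    have e1 : (∫ y in Ioc (0:ℝ) t, h y) = ∫ y in Ioc (0:ℝ) t, z₂ := by
      refine setIntegral_congr_ae measurableSet_Ioc ?_
      filter_upwards [hae_t] with y hy hmem
      have hylt : y < t := lt_of_le_of_ne hmem.2 hy
      have : Int.fract y = y := Int.fract_eq_self.2 ⟨hmem.1.le, hylt.trans ht1⟩
      simp [hh_def, this, hylt]
    have e2 : (∫ y in Ioc t 1, h y) = ∫ y in Ioc t (1:ℝ), z₁ := by
      refine setIntegral_congr_ae measurableSet_Ioc ?_
      filter_upwards [hae_1] with y hy hmem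
      have hylt : y < 1 := lt_of_le_of_ne hmem.2 hy
      have hfr : Int.fract y = y := Int.fract_eq_self.2 ⟨(ht0.trans hmem.1).le, hylt⟩
      have : ¬ Int.fract y < t := by rw [hfr]; exact not_lt.2 hmem.1.le
      simp [hh_def, this]
    rw [e1, e2, setIntegral_const, setIntegral_const, Real.volume_real_Ioc_of_le ht0.le,
      Real.volume_real_Ioc_of_le ht1.le]
    simp only [smul_eq_mul, sub_zero]
    linarith [key]
  set g : ℝ → ℝ := fun x => ∫ y in (0:ℝ)..x, h y with hg_def
  have hg0 : g 0 = 0 := intervalIntegral.integral_same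
  have hgper : Function.Periodic g 1 := by
    intro x
    have hadd : g x + (∫ y in x..(x+1), h y) = g (x + 1) :=
      intervalIntegral.integral_add_adjacent_intervals (hint 0 x) (hint x (x+1))
    have hshift : (∫ y in x..(x+1), h y) = ∫ y in (0:ℝ)..(0+1), h y :=
      hper.intervalIntegral_add_eq x 0
    rw [← hadd, hshift]
    simp [hI1]
  have hgbd : ∀ x, |g x| ≤ M := by
    intro x
    have h1 : g (x - (⌊x⌋ : ℝ) * 1) = g x := hgper.sub_int_mul_eq ⌊x⌋
    have h2 : g (Int.fract x) = g x := by
      rw [← h1]; congr 1; rw [Int.fract]; ring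
    rw [← h2]
    have h3 : |g (Int.fract x)| ≤ M * |Int.fract x - 0| := by
      rw [← Real.norm_eq_abs]
      exact intervalIntegral.norm_integral_le_of_norm_le_const
        (fun y _ => by rw [Real.norm_eq_abs]; exact hMb y)
    have h4 : |Int.fract x - 0| ≤ 1 := by
      rw [sub_zero, abs_of_nonneg (Int.fract_nonneg x)]
      exact (Int.fract_lt_one x).le
    calc |g (Int.fract x)| ≤ M * |Int.fract x - 0| := h3
      _ ≤ M * 1 := by exact mul_le_mul_of_nonneg_left h4 hM0.le
      _ = M := mul_one M
  -- scaled sawtooth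
  set N : ℝ := (n : ℝ) + 1 with hN_def
  have hNpos : 0 < N := by positivity
  have hNnz : N ≠ 0 := hNpos.ne'
  set uu : ℝ → ℝ := fun x => N⁻¹ * g (N * x) with huu_def
  set vv : ℝ → ℝ := fun x => h (N * x) with hvv_def
  have hrep : ∀ x : ℝ, (∫ s in (0:ℝ)..x, vv s) = uu x := by
    intro x
    have := intervalIntegral.integral_comp_mul_left (a := (0:ℝ)) (b := x)
      (f := h) (c := N) hNnz
    rw [hvv_def, huu_def]
    simp only [mul_zero] at this
    rw [this, smul_eq_mul]
  have hvmeas : Measurable vv := hmeas.comp (measurable_const_mul N)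
  have hvb : ∀ y, |vv y| ≤ M := fun y => hMb _
  have hadm : AdmissibleW1p0 p uu vv := by
    refine ⟨by simp [huu_def, hg0], ?_, fun x _ => (hrep x).symm,
      intervalIntegrable_of_bdd hvmeas hvb 0 1, ?_⟩
    · have hgN : g N = 0 := by
        have := hgper.nat_mul_eq (n + 1)
        rw [hg0, mul_one] at this
        rw [hN_def]
        push_cast at this
        exact this
      simp [huu_def, hgN]
    · have hcont : Continuous (fun s : ℝ => |s| ^ p) :=
        continuous_abs.rpow_const (fun s => Or.inr hp)
      refine intervalIntegrable_of_bdd (M := M ^ p) (hcont.measurable.comp hvmeas) ?_ 0 1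
      intro y
      rw [Function.comp_apply, abs_of_nonneg (Real.rpow_nonneg (abs_nonneg _) p)]
      exact Real.rpow_le_rpow (abs_nonneg _) (hvb y) hp
  refine ⟨uu, vv, hadm, ?_⟩
  have henergy : energyE W uu vv = ∫ x in (0:ℝ)..1, (uu x) ^ 2 := by
    unfold energyE
    congr 1
    funext x
    rw [hWh (N * x), zero_add]
  have huub : ∀ x, |uu x| ≤ M / N := by
    intro x
    rw [huu_def]
    rw [abs_mul, abs_of_nonneg (inv_nonneg.2 hNpos.le), div_eq_inv_mul]
    exact mul_le_mul_of_nonneg_left (hgbd _) (inv_nonneg.2 hNpos.le)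
  have hbd : ∀ x ∈ Set.uIoc (0:ℝ) 1, ‖(uu x) ^ 2‖ ≤ (M / N) ^ 2 := by
    intro x _
    rw [Real.norm_eq_abs, abs_pow]
    exact pow_le_pow_left₀ (abs_nonneg _) (huub x) 2
  calc energyE W uu vv = ∫ x in (0:ℝ)..1, (uu x) ^ 2 := henergy
    _ ≤ |∫ x in (0:ℝ)..1, (uu x) ^ 2| := le_abs_self _
    _ ≤ (M / N) ^ 2 * |1 - 0| := by
        rw [← Real.norm_eq_abs]
        exact intervalIntegral.norm_integral_le_of_norm_le_const hbd
    _ = (M / N) ^ 2 := by norm_num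

lemma energy_ne_zero (W : ℝ → ℝ) (p c₃ : ℝ) (hW_cont : Continuous W)
    (hW_nonneg : ∀ s, 0 ≤ W s) (h0 : W 0 ≠ 0)
    (hub : ∀ s, W s ≤ c₃ * (|s| ^ p + 1))
    (u u' : ℝ → ℝ) (hadm : AdmissibleW1p0 p u u') : energyE W u u' ≠ 0 := by
  obtain ⟨hu0, hu1, hrep, hInt, hIntp⟩ := hadm
  intro hE
  set F : ℝ → ℝ := fun x => ∫ s in (0:ℝ)..x, u' s with hF_def
  have huF : EqOn u F (Icc 0 1) := fun x hx => hrep x hx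
  have hIccInt : IntegrableOn u' (uIcc (0:ℝ) 1) volume := by
    rw [uIcc_of_le zero_le_one]
    exact hInt.1.congr_set_ae Ioc_ae_eq_Icc.symm |>.mono_set (by norm_num) |>.mono_set subset_rfl
  have hFcont : ContinuousOn F (Icc 0 1) := by
    have := intervalIntegral.continuousOn_primitive_interval (a := (0:ℝ)) (b := 1)
      (μ := volume) (f := u') hIccInt
    rwa [uIcc_of_le zero_le_one] at this
  -- integrability of the energy integrand on (0,1]
  have hmeasW : AEStronglyMeasurable (fun x => W (u' x)) (volume.restrict (Ioc (0:ℝ) 1)) :=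
    hW_cont.comp_aestronglyMeasurable hInt.1.aestronglyMeasurable
  have hdom : IntegrableOn (fun x => c₃ * (|u' x| ^ p + 1)) (Ioc (0:ℝ) 1) volume := by
    refine Integrable.const_mul ?_ c₃
    exact hIntp.1.add (integrableOn_const measure_Ioc_lt_top.ne)
  have hWint : IntegrableOn (fun x => W (u' x)) (Ioc (0:ℝ) 1) volume := by
    refine hdom.mono' hmeasW (ae_of_all _ fun x => ?_)
    rw [Real.norm_eq_abs, abs_of_nonneg (hW_nonneg _)]
    exact hub _
  have hu2int : IntegrableOn (fun x => u x ^ 2) (Ioc (0:ℝ) 1) volume := by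
    have hF2 : IntegrableOn (fun x => F x ^ 2) (Icc (0:ℝ) 1) volume :=
      (hFcont.pow 2).integrableOn_Icc
    refine (hF2.mono_set Ioc_subset_Icc_self).congr_fun ?_ measurableSet_Ioc
    intro x hx
    simp only []
    rw [huF (Ioc_subset_Icc_self hx)]
  have hPhiInt : IntegrableOn (fun x => W (u' x) + u x ^ 2) (Ioc (0:ℝ) 1) volume :=
    hWint.add hu2int
  -- the integral of the nonnegative integrand is zero
  have hzero : (∫ x in Ioc (0:ℝ) 1, (W (u' x) + u x ^ 2)) = 0 := by
    rw [← intervalIntegral.integral_of_le zero_le_one]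
    exact hE
  have hae0 : (fun x => W (u' x) + u x ^ 2) =ᵐ[volume.restrict (Ioc (0:ℝ) 1)] 0 := by
    rw [← integral_eq_zero_iff_of_nonneg (fun x => add_nonneg (hW_nonneg _) (sq_nonneg _)) hPhiInt]
    exact hzero
  -- pointwise a.e. conclusions on (0,1]
  have hWae : ∀ᵐ x ∂(volume.restrict (Ioc (0:ℝ) 1)), W (u' x) = 0 := by
    filter_upwards [hae0] with x hx
    have h1 : W (u' x) + u x ^ 2 = 0 := hx
    nlinarith [hW_nonneg (u' x), sq_nonneg (u x)]
  have huae : ∀ᵐ x ∂(volume.restrict (Ioc (0:ℝ) 1)), u x = 0 := by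
    filter_upwards [hae0] with x hx
    have h1 : W (u' x) + u x ^ 2 = 0 := hx
    nlinarith [hW_nonneg (u' x), sq_nonneg (u x)]
  -- F vanishes identically on [0,1]
  have hFae : F =ᵐ[volume.restrict (Icc (0:ℝ) 1)] (fun _ => 0) := by
    rw [Measure.restrict_congr_set Ioc_ae_eq_Icc.symm]
    filter_upwards [huae, ae_restrict_mem measurableSet_Ioc] with x hx hmem
    rw [← huF (Ioc_subset_Icc_self hmem)]
    exact hx
  have hF0 : EqOn F (fun _ => 0) (Icc (0:ℝ) 1) := by
    refine Measure.eqOn_of_ae_eq hFae hFcont continuousOn_const ?_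
    rw [interior_Icc, closure_Ioo (by norm_num : (0:ℝ) ≠ 1)]
  -- Lebesgue differentiation: u' = 0 a.e. on (0,1)
  set f : ℝ → ℝ := (Ioc (0:ℝ) 1).indicator u' with hf_def
  have hfint : Integrable f volume := hInt.1.integrable_indicator measurableSet_Ioc
  have hfloc : LocallyIntegrable f volume := hfint.locallyIntegrable
  have hdiff := IsUnifLocDoublingMeasure.ae_tendsto_average (μ := volume) hfloc 1
  have hu'0 : ∀ᵐ x ∂(volume : Measure ℝ), x ∈ Ioo (0:ℝ) 1 → u' x = 0 := by
    filter_upwards [hdiff] with x hx hmem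
    set r : ℝ := min x (1 - x) / 2 with hr_def
    have hrpos : 0 < r := by
      have h1 : 0 < x := hmem.1
      have h2 : x < 1 := hmem.2
      have : 0 < min x (1 - x) := lt_min h1 (by linarith)
      positivity
    have hrx : r < x := by
      have : min x (1 - x) ≤ x := min_le_left _ _
      have h1 : 0 < x := hmem.1
      rw [hr_def]; linarith
    have hr1 : x + r ≤ 1 := by
      have : min x (1 - x) ≤ 1 - x := min_le_right _ _
      rw [hr_def]; linarith
    set δ : ℕ → ℝ := fun j => r * (1 / ((j : ℝ) + 1)) with hδ_def
    have hδpos : ∀ j, 0 < δ j := fun j => by positivity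
    have hδle : ∀ j, δ j ≤ r := fun j => by
      rw [hδ_def]
      calc r * (1 / ((j : ℝ) + 1)) ≤ r * 1 := by
            refine mul_le_mul_of_nonneg_left ?_ hrpos.le
            rw [div_le_one (by positivity)]
            simp
        _ = r := mul_one r
    have hδtend : Tendsto δ atTop (nhdsWithin 0 (Ioi 0)) := by
      refine tendsto_nhdsWithin_iff.2 ⟨?_, Eventually.of_forall fun j => hδpos j⟩
      have := tendsto_one_div_add_atTop_nhds_zero_nat.const_mul r
      simpa [hδ_def] using this
    have hmem' : ∀ᶠ j in (atTop : Filter ℕ), x ∈ Metric.closedBall x (1 * δ j) :=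
      Eventually.of_forall fun j => by
        rw [one_mul]; exact Metric.mem_closedBall_self (hδpos j).le
    have htend := hx (fun _ : ℕ => x) δ hδtend hmem'
    have havg : ∀ j : ℕ, (⨍ y in Metric.closedBall x (δ j), f y) = 0 := by
      intro j
      have hsub : Metric.closedBall x (δ j) ⊆ Ioc 0 1 := by
        rw [Real.closedBall_eq_Icc]
        intro y hy
        constructor
        · have := hy.1; have := hδle j; nlinarith [hδle j]
        · have := hy.2; nlinarith [hδle j]
      have hintzero : (∫ y in Metric.closedBall x (δ j), f y) = 0 := by
        rw [hf_def, setIntegral_indicator measurableSet_Ioc,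
          inter_eq_self_of_subset_left hsub, Real.closedBall_eq_Icc,
          integral_Icc_eq_integral_Ioc,
          ← intervalIntegral.integral_of_le (by linarith [hδpos j] : x - δ j ≤ x + δ j)]
        have hia : IntervalIntegrable u' volume 0 (x - δ j) := by
          refine hInt.mono_set ?_
          rw [uIcc_of_le (by nlinarith [hδle j, hmem.1, hmem.2, hrx] : (0:ℝ) ≤ x - δ j),
            uIcc_of_le zero_le_one]
          exact Icc_subset_Icc le_rfl (by nlinarith [hδpos j, hmem.1, hmem.2])
        have hib : IntervalIntegrable u' volume 0 (x + δ j) := by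
          refine hInt.mono_set ?_
          rw [uIcc_of_le (by nlinarith [hδpos j, hmem.1] : (0:ℝ) ≤ x + δ j),
            uIcc_of_le zero_le_one]
          exact Icc_subset_Icc le_rfl (by nlinarith [hδle j, hr1])
        have hsplit := intervalIntegral.integral_interval_sub_left hib hia
        have hFa : F (x - δ j) = 0 :=
          hF0 ⟨by nlinarith [hδle j, hmem.1, hmem.2, hrx], by nlinarith [hδpos j, hmem.2]⟩
        have hFb : F (x + δ j) = 0 :=
          hF0 ⟨by nlinarith [hδpos j, hmem.1], by nlinarith [hδle j, hr1]⟩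
        have : F (x + δ j) - F (x - δ j) = ∫ y in (x - δ j)..(x + δ j), u' y := hsplit
        rw [← this, hFa, hFb, sub_zero]
      rw [setAverage_eq, hintzero, smul_zero]
    have hfx : f x = 0 := by
      have htend' : Tendsto (fun j : ℕ => ⨍ y in Metric.closedBall x (δ j), f y)
          atTop (nhds (f x)) := htend
      rw [funext havg] at htend'
      exact tendsto_nhds_unique htend' tendsto_const_nhds
    rw [hf_def] at hfx
    rwa [indicator_of_mem (Ioo_subset_Ioc_self hmem)] at hfx
  -- derive the contradiction
  have hWglob : ∀ᵐ x ∂(volume : Measure ℝ), x ∈ Ioc (0:ℝ) 1 → W (u' x) = 0 :=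
    (ae_restrict_iff' measurableSet_Ioc).1 hWae
  have hcontra : ∀ᵐ x ∂(volume : Measure ℝ), x ∉ Ioo (0:ℝ) 1 := by
    filter_upwards [hWglob, hu'0] with x h1 h2 hx
    exact h0 (h2 hx ▸ h1 (Ioo_subset_Ioc_self hx))
  have hnull : (volume : Measure ℝ) (Ioo (0:ℝ) 1) = 0 := by
    have h2 := ae_iff.1 hcontra
    simp only [not_not] at h2
    rw [show Ioo (0:ℝ) 1 = {a : ℝ | a ∈ Ioo (0:ℝ) 1} from rfl]
    exact h2
  rw [Real.volume_Ioo] at hnull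
  norm_num at hnull

theorem statement0
    (W : ℝ → ℝ) (p c₁ c₂ c₃ z₁ z₂ : ℝ)
    (hW_cont : Continuous W) (hW_nonneg : ∀ s, 0 ≤ W s)
    (hZ_fin : {s : ℝ | W s = 0}.Finite)
    (hz₁ : W z₁ = 0) (hz₂ : W z₂ = 0) (hz₁neg : z₁ < 0) (hz₂pos : 0 < z₂)
    (h0 : W 0 ≠ 0)
    (hc₁ : 0 < c₁) (hc₂ : 0 < c₂) (hc₃ : 0 < c₃) (hp : 1 < p)
    (hlb : ∀ s, c₁ * |s| ^ p - c₂ ≤ W s)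
    (hub : ∀ s, W s ≤ c₃ * (|s| ^ p + 1)) :
    sInf {e : ℝ | ∃ u u' : ℝ → ℝ, AdmissibleW1p0 p u u' ∧ e = energyE W u u'} = 0 ∧
    (0:ℝ) ∉ {e : ℝ | ∃ u u' : ℝ → ℝ, AdmissibleW1p0 p u u' ∧ e = energyE W u u'} := by
  set S := {e : ℝ | ∃ u u' : ℝ → ℝ, AdmissibleW1p0 p u u' ∧ e = energyE W u u'} with hS_def
  have hp0 : (0:ℝ) ≤ p := by linarith
  set M : ℝ := max z₂ (-z₁) with hM_def
  have hM0 : 0 < M := lt_max_of_lt_left hz₂pos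
  have hmem : ∀ n : ℕ, ∃ e ∈ S, e ≤ (M / ((n:ℝ)+1))^2 := by
    intro n
    obtain ⟨u, u', hadm, hle⟩ := sawtooth_exists W p z₁ z₂ hz₁ hz₂ hz₁neg hz₂pos hW_nonneg hp0 n
    exact ⟨energyE W u u', ⟨u, u', hadm, rfl⟩, hle⟩
  have hlow : ∀ e ∈ S, (0:ℝ) ≤ e := by
    rintro e ⟨u, u', hadm, rfl⟩
    exact intervalIntegral.integral_nonneg zero_le_one
      (fun x _ => add_nonneg (hW_nonneg _) (sq_nonneg _))
  constructor
  · refine csInf_eq_of_forall_ge_of_forall_gt_exists_lt ?_ hlow ?_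
    · obtain ⟨e, he, _⟩ := hmem 0
      exact ⟨e, he⟩
    · intro w hw
      obtain ⟨n, hn⟩ := exists_nat_gt (M / Real.sqrt w)
      obtain ⟨e, heS, hle⟩ := hmem n
      refine ⟨e, heS, lt_of_le_of_lt hle ?_⟩
      have hsq : 0 < Real.sqrt w := Real.sqrt_pos.2 hw
      have h1 : M / ((n:ℝ)+1) < Real.sqrt w := by
        rw [div_lt_iff₀ (by positivity)]
        have h2 : M / Real.sqrt w < (n:ℝ) + 1 := lt_of_lt_of_le hn (by linarith)
        calc M = (M / Real.sqrt w) * Real.sqrt w := by field_simp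
          _ < ((n:ℝ)+1) * Real.sqrt w := mul_lt_mul_of_pos_right h2 hsq
          _ = Real.sqrt w * ((n:ℝ)+1) := mul_comm _ _
      calc (M/((n:ℝ)+1))^2 < (Real.sqrt w)^2 := by
            apply pow_lt_pow_left₀ h1 (by positivity)
            norm_num
        _ = w := Real.sq_sqrt hw.le
  · rintro ⟨u, u', hadm, hE⟩
    exact energy_ne_zero W p c₃ hW_cont hW_nonneg h0 hub u u' hadm hE.symm
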